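/- Under the cycle structure of the previous lemma (each −1 isolated and followed by at least L ≥ (1−2ρ)/ρ steps of +1, with ρ < 1/2), the average sign satisfies (1/T)·Σ_{t=1}^T s^t ≥ 1 − 2ρ/(1−ρ) − 4/T. -/
import Mathlib


theorem average_sign_lower_bound
    (T T₀ : ℕ) (ρ : ℝ) (hρ0 : 0 < ρ) (hρ : ρ < 1/2)
    (s : ℕ → ℤ) (hval : ∀ t, s t = 1 ∨ s t = -1)
    (hT₀pos : 1 ≤ T₀) (hT₀le : T₀ ≤ T)
    (hbefore : ∀ t, 1 ≤ t → t < T₀ → s t = 1)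
    (hfirst : s T₀ = -1)
    (hγ : (((Finset.Icc (T₀ + 1) T).filter (fun t => s t = -1)).card : ℝ)
        ≤ ((T : ℝ) - T₀) * ρ / (1 - ρ) + 1) :
    (1 / (T : ℝ)) * ∑ t ∈ Finset.Icc 1 T, ((s t : ℝ))
      ≥ 1 - 2 * ρ / (1 - ρ) - 4 / T := by
  have hT : 1 ≤ T := le_trans hT₀pos hT₀le
  set γ := ((Finset.Icc (T₀ + 1) T).filter (fun t => s t = -1)).card with hγdef
  set B := (Finset.Icc 1 T).filter (fun t => s t = -1) with hBdef
  -- sum over ℤ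
  have hsum : ∑ t ∈ Finset.Icc 1 T, s t = (T : ℤ) - 2 * B.card := by
    have h1 : ∀ t ∈ Finset.Icc 1 T, s t
        = 1 - 2 * (if s t = -1 then (1 : ℤ) else 0) := by
      intro t _; rcases hval t with h | h <;> simp [h]
    rw [Finset.sum_congr rfl h1, Finset.sum_sub_distrib, Finset.sum_const,
      ← Finset.mul_sum, Finset.sum_boole, Nat.card_Icc]
    simp [hBdef]
  -- split B
  have hsplit : Finset.Icc 1 T = Finset.Icc 1 T₀ ∪ Finset.Icc (T₀ + 1) T := by
    ext t; simp only [Finset.mem_Icc, Finset.mem_union]; omega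
  have hdisj : Disjoint ((Finset.Icc 1 T₀).filter (fun t => s t = -1))
      ((Finset.Icc (T₀ + 1) T).filter (fun t => s t = -1)) := by
    rw [Finset.disjoint_left]
    intro a ha hb
    simp only [Finset.mem_filter, Finset.mem_Icc] at ha hb
    omega
  have hfirstpart : (Finset.Icc 1 T₀).filter (fun t => s t = -1) = {T₀} := by
    ext t
    simp only [Finset.mem_filter, Finset.mem_Icc, Finset.mem_singleton]
    constructor
    · rintro ⟨⟨h1, h2⟩, h3⟩
      by_contra h
      have := hbefore t h1 (by omega)
      omega
    · rintro rfl
      exact ⟨⟨hT₀pos, le_refl _⟩, hfirst⟩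
  have hBcard : B.card = 1 + γ := by
    rw [hBdef, hsplit, Finset.filter_union, Finset.card_union_of_disjoint hdisj,
      hfirstpart, Finset.card_singleton]
  -- real version of the sum
  have hsumR : ∑ t ∈ Finset.Icc 1 T, ((s t : ℝ)) = (T : ℝ) - 2 * (1 + γ) := by
    have := hsum
    rw [hBcard] at this
    have : ((∑ t ∈ Finset.Icc 1 T, s t : ℤ) : ℝ) = (((T : ℤ) - 2 * (1 + γ : ℕ) : ℤ) : ℝ) := by
      exact_mod_cast congrArg (Int.cast : ℤ → ℝ) this
    push_cast at this ⊢
    linarith [this]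
  rw [hsumR, ge_iff_le, ← sub_nonneg]
  have hTpos : (0 : ℝ) < T := by exact_mod_cast hT
  have h1ρ : (0 : ℝ) < 1 - ρ := by linarith
  have hT₀nn : (0 : ℝ) ≤ (T₀ : ℝ) := Nat.cast_nonneg _
  have hγ2 : (γ : ℝ) ≤ (T : ℝ) * ρ / (1 - ρ) + 1 := by
    refine le_trans hγ ?_
    have : ((T : ℝ) - T₀) * ρ / (1 - ρ) ≤ (T : ℝ) * ρ / (1 - ρ) := by
      gcongr
      linarith
    linarith
  have e : 1 / (T : ℝ) * ((T : ℝ) - 2 * (1 + γ)) - (1 - 2 * ρ / (1 - ρ) - 4 / T)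
      = (2 * ((T : ℝ) * ρ / (1 - ρ)) + 2 - 2 * γ) / T := by
    field_simp
    ring
  rw [e]
  apply div_nonneg _ (le_of_lt hTpos)
  linarith
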